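/- arXiv:1609.00909 — 2 statements merged into one kernel-verified Lean document; each statement's English description precedes it below -/
import Mathlib

section
/- Fix d ≥ 2. For any integer n ≥ 1 and any finite set W ⊆ ℤ^d, there exists a family 𝒜 of approximations, each of size at most 3|W|, with |𝒜| ≤ 4^{|W|/d}, such that every finite regular odd set S with |∂S| = n that is separated by W is approximated by some element of 𝒜. -/
/-- The nearest-neighbor lattice graph on `ℤ^d`: two vertices are adjacent
iff they differ by one in exactly one coordinate (equivalently, ℓ¹-distance 1). -/
def ZGraph (d : ℕ) : SimpleGraph (Fin d → ℤ) where
  Adj u v := ∑ i, (u i - v i).natAbs = 1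
  symm := by
    constructor
    intro u v h
    have e : ∀ i, (v i - u i).natAbs = (u i - v i).natAbs := fun i => by
      rw [← Int.natAbs_neg, neg_sub]
    simpa only [e] using h
  loopless := by
    constructor
    intro u h
    simp at h

/-- A vertex is odd if its coordinate sum is odd. -/
def OddVert {d : ℕ} (v : Fin d → ℤ) : Prop := Odd (∑ i, v i)

/-- A vertex is even if its coordinate sum is even. -/
def EvenVert {d : ℕ} (v : Fin d → ℤ) : Prop := Even (∑ i, v i)

/-- Internal vertex-boundary of `U`. -/
def intBdry (d : ℕ) (U : Set (Fin d → ℤ)) : Set (Fin d → ℤ) :=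
  {u ∈ U | ∃ v, (ZGraph d).Adj u v ∧ v ∉ U}

/-- External vertex-boundary of `U`. -/
def extBdry (d : ℕ) (U : Set (Fin d → ℤ)) : Set (Fin d → ℤ) :=
  {v | v ∉ U ∧ ∃ u ∈ U, (ZGraph d).Adj u v}

/-- A set is odd if its internal vertex-boundary consists of odd vertices. -/
def IsOddSet (d : ℕ) (U : Set (Fin d → ℤ)) : Prop := ∀ u ∈ intBdry d U, OddVert u

/-- A set is even if its internal vertex-boundary consists of even vertices. -/
def IsEvenSet (d : ℕ) (U : Set (Fin d → ℤ)) : Prop := ∀ u ∈ intBdry d U, EvenVert u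

/-- The edge-boundary of `U`: edges with exactly one endpoint in `U`. -/
def edgeBdry (d : ℕ) (U : Set (Fin d → ℤ)) : Set (Sym2 (Fin d → ℤ)) :=
  {e | ∃ u v, (ZGraph d).Adj u v ∧ u ∈ U ∧ v ∉ U ∧ e = s(u, v)}

/-- A cutset: a non-empty finite subset of `ℤ^d` which is connected and co-connected. -/
def IsCutset (d : ℕ) (U : Set (Fin d → ℤ)) : Prop :=
  U.Finite ∧ U.Nonempty ∧ ((ZGraph d).induce U).Connected ∧ ((ZGraph d).induce Uᶜ).Connected

/-- `OCC d n`: the number of odd cutsets in `ℤ^d` containing the origin with `n` boundary edges. -/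
noncomputable def OCC (d n : ℕ) : ℕ :=
  {S : Set (Fin d → ℤ) | IsCutset d S ∧ IsOddSet d S ∧ (0 : Fin d → ℤ) ∈ S ∧
    (edgeBdry d S).ncard = n}.ncard

/-- A set is regular if both it and its complement have no isolated vertices. -/
def IsRegularSet (d : ℕ) (U : Set (Fin d → ℤ)) : Prop :=
  (∀ u ∈ U, ∃ v ∈ U, (ZGraph d).Adj u v) ∧ (∀ u ∉ U, ∃ v ∉ U, (ZGraph d).Adj u v)

/-- The graph `(ℤ^d)^{⊗r}` where two vertices are adjacent iff their lattice distance is ≤ r. -/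
def PowGraph (d r : ℕ) : SimpleGraph (Fin d → ℤ) where
  Adj u v := u ≠ v ∧ (ZGraph d).dist u v ≤ r
  symm := by
    constructor
    rintro u v ⟨h1, h2⟩
    exact ⟨h1.symm, by rwa [SimpleGraph.dist_comm]⟩
  loopless := by constructor; rintro u ⟨h, -⟩; exact h rfl

/-- An `r`-cutset: a finite regular set, connected and co-connected in `(ℤ^d)^{⊗r}`. -/
def IsRCutset (d r : ℕ) (U : Set (Fin d → ℤ)) : Prop :=
  U.Finite ∧ IsRegularSet d U ∧
    ((PowGraph d r).induce U).Connected ∧ ((PowGraph d r).induce Uᶜ).Connected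

/-- An approximation: a pair of disjoint subsets of `ℤ^d`, the first odd, the second even. -/
structure Approx (d : ℕ) where
  inn : Set (Fin d → ℤ)
  out : Set (Fin d → ℤ)
  disj : Disjoint inn out
  inn_odd : IsOddSet d inn
  out_even : IsEvenSet d out

/-- The set of unknown vertices of an approximation. -/
def Approx.star {d : ℕ} (A : Approx d) : Set (Fin d → ℤ) := (A.inn ∪ A.out)ᶜ

/-- `A` approximates `S` if `A.inn ⊆ S` and `A.out ⊆ Sᶜ`. -/
def Approximates {d : ℕ} (A : Approx d) (S : Set (Fin d → ℤ)) : Prop :=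
  A.inn ⊆ S ∧ A.out ⊆ Sᶜ

/-- A `t`-approximation: the subgraph induced on the unknown vertices has
maximum degree at most `t` and no isolated vertices. -/
def IsTApprox (d t : ℕ) (A : Approx d) : Prop :=
  (∀ v ∈ A.star, ({u ∈ A.star | (ZGraph d).Adj v u}).ncard ≤ t) ∧
  (∀ v ∈ A.star, ∃ u ∈ A.star, (ZGraph d).Adj v u)

/-- The neighborhood `N(U)` of a set. -/
def nbrSet (d : ℕ) (U : Set (Fin d → ℤ)) : Set (Fin d → ℤ) :=
  {v | ∃ u ∈ U, (ZGraph d).Adj v u}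

/-- `U⁺ = U ∪ N(U)`. -/
def plus (d : ℕ) (U : Set (Fin d → ℤ)) : Set (Fin d → ℤ) := U ∪ nbrSet d U

/-- `W` separates `S` if every boundary edge of `S` has an endpoint in `W`. -/
def Separates (d : ℕ) (W S : Set (Fin d → ℤ)) : Prop :=
  ∀ a b : Fin d → ℤ, s(a, b) ∈ edgeBdry d S → a ∈ W ∨ b ∈ W
open Finset in
theorem sum_nat_eq_one {d : ℕ} {f : Fin d → ℕ} (h : ∑ j, f j = 1) :
    ∃ i, f i = 1 ∧ ∀ j, j ≠ i → f j = 0 := by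
  have h1 : ∃ i ∈ Finset.univ, f i ≠ 0 := by
    by_contra hc
    push_neg at hc
    simp only [Finset.mem_univ, true_implies] at hc
    rw [Finset.sum_eq_zero (fun i _ => hc i)] at h; omega
  obtain ⟨i, -, hi⟩ := h1
  have hle : f i ≤ 1 := h ▸ Finset.single_le_sum (fun j _ => Nat.zero_le _) (Finset.mem_univ i)
  refine ⟨i, by omega, fun j hj => ?_⟩
  have h2 : f i + ∑ k ∈ Finset.univ.erase i, f k = ∑ k, f k :=
    Finset.add_sum_erase Finset.univ f (Finset.mem_univ i)
  have hj' : j ∈ Finset.univ.erase i := Finset.mem_erase.2 ⟨hj, Finset.mem_univ j⟩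
  have h3 : f j ≤ ∑ k ∈ Finset.univ.erase i, f k :=
    Finset.single_le_sum (fun k _ => Nat.zero_le _) hj'
  omega

/-- signed unit vector -/
def zind {d : ℕ} (i : Fin d) (s : ℤ) : Fin d → ℤ := fun j => if j = i then s else 0

theorem zadj_def {d : ℕ} {u v : Fin d → ℤ} :
    (ZGraph d).Adj u v ↔ ∑ i, (u i - v i).natAbs = 1 := Iff.rfl

theorem zadj_iff {d : ℕ} {u v : Fin d → ℤ} :
    (ZGraph d).Adj u v ↔ ∃ i : Fin d, ∃ s : ℤ, (s = 1 ∨ s = -1) ∧ v = u + zind i s := by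
  rw [zadj_def]
  constructor
  · intro h
    obtain ⟨i, hi, hj⟩ := sum_nat_eq_one h
    refine ⟨i, v i - u i, ?_, ?_⟩
    · have h1 : (u i - v i).natAbs = 1 := hi
      omega
    · funext j
      by_cases hji : j = i
      · subst hji; simp [zind]
      · have h0 : (u j - v j).natAbs = 0 := hj j hji
        have : u j = v j := by omega
        show v j = u j + zind i (v i - u i) j
        simp [zind, hji, this]
  · rintro ⟨i, s, hs, rfl⟩
    have he : ∀ j, ((u j) - (u j + zind i s j)).natAbs = if j = i then 1 else 0 := by
      intro j; rcases hs with rfl | rfl <;> by_cases hji : j = i <;> simp [zind, hji]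
    calc ∑ j, ((u j) - ((u + zind i s) j)).natAbs
        = ∑ j, if j = i then 1 else 0 := Finset.sum_congr rfl (fun j _ => he j)
      _ = 1 := by simp

theorem zadj_sum {d : ℕ} {u v : Fin d → ℤ} (h : (ZGraph d).Adj u v) :
    (∑ j, v j) = (∑ j, u j) + 1 ∨ (∑ j, v j) = (∑ j, u j) - 1 := by
  obtain ⟨i, s, hs, rfl⟩ := zadj_iff.1 h
  have : ∑ j, (u + zind i s) j = (∑ j, u j) + ∑ j, zind i s j := by
    simp [Finset.sum_add_distrib]
  have hz : ∑ j, zind i s j = s := by simp [zind]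
  rcases hs with rfl | rfl
  · left; rw [this, hz]
  · right; rw [this, hz]; ring

theorem zadj_even_odd {d : ℕ} {u v : Fin d → ℤ} (h : (ZGraph d).Adj u v) :
    (EvenVert u ↔ OddVert v) := by
  unfold EvenVert OddVert
  rw [Int.even_iff, Int.odd_iff]
  rcases zadj_sum h with h' | h' <;> rw [h'] <;> omega

theorem zadj_odd_even {d : ℕ} {u v : Fin d → ℤ} (h : (ZGraph d).Adj u v) :
    (OddVert u ↔ EvenVert v) := by
  unfold EvenVert OddVert
  rw [Int.even_iff, Int.odd_iff]
  rcases zadj_sum h with h' | h' <;> rw [h'] <;> omega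

theorem evenVert_or_oddVert {d : ℕ} (v : Fin d → ℤ) : EvenVert v ∨ OddVert v :=
  Int.even_or_odd _

theorem not_evenVert_oddVert {d : ℕ} {v : Fin d → ℤ} (h1 : EvenVert v) (h2 : OddVert v) :
    False := by
  unfold EvenVert at h1; unfold OddVert at h2
  rw [Int.even_iff] at h1; rw [Int.odd_iff] at h2; omega

/-- the finset of neighbors of a vertex -/
def nbrF {d : ℕ} (u : Fin d → ℤ) : Finset (Fin d → ℤ) :=
  Finset.univ.image (fun p : Fin d × Bool => u + zind p.1 (if p.2 then 1 else -1))

theorem mem_nbrF {d : ℕ} {u v : Fin d → ℤ} : v ∈ nbrF u ↔ (ZGraph d).Adj u v := by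
  rw [zadj_iff]
  simp only [nbrF, Finset.mem_image, Finset.mem_univ, true_and]
  constructor
  · rintro ⟨⟨i, b⟩, h⟩
    exact ⟨i, if b then 1 else -1, by cases b <;> simp, h.symm⟩
  · rintro ⟨i, s, hs, rfl⟩
    rcases hs with rfl | rfl
    · exact ⟨(i, true), by simp⟩
    · exact ⟨(i, false), by simp⟩

theorem card_nbrF {d : ℕ} (u : Fin d → ℤ) : (nbrF u).card = 2 * d := by
  rw [nbrF, Finset.card_image_of_injective, Finset.card_univ, Fintype.card_prod,
    Fintype.card_fin, Fintype.card_bool]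
  · ring
  · rintro ⟨i, b⟩ ⟨i', b'⟩ hp
    simp only at hp
    have hp' : zind i (if b then 1 else -1) = zind i' (if b' then 1 else -1) :=
      add_left_cancel hp
    have h1 := congrFun hp' i
    have h2 := congrFun hp' i'
    simp only [zind, if_pos rfl] at h1 h2
    by_cases hii : i = i'
    · subst hii
      simp only [if_pos rfl] at h1
      cases b <;> cases b' <;> simp_all <;> omega
    · rw [if_neg hii] at h1
      cases b <;> simp at h1 <;> omega
open Classical in
/-- internal ordered adjacent pairs of a finset -/
noncomputable def ipF {d : ℕ} (C : Finset (Fin d → ℤ)) : Finset ((Fin d → ℤ) × (Fin d → ℤ)) :=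
  C.biUnion (fun u => ((nbrF u).filter (fun v => v ∈ C)).image (fun v => (u, v)))

open Classical in
/-- boundary ordered pairs of a finset -/
noncomputable def bpF {d : ℕ} (C : Finset (Fin d → ℤ)) : Finset ((Fin d → ℤ) × (Fin d → ℤ)) :=
  C.biUnion (fun u => ((nbrF u).filter (fun v => v ∉ C)).image (fun v => (u, v)))

theorem mem_ipF {d : ℕ} {C : Finset (Fin d → ℤ)} {p : (Fin d → ℤ) × (Fin d → ℤ)} :
    p ∈ ipF C ↔ p.1 ∈ C ∧ p.2 ∈ C ∧ (ZGraph d).Adj p.1 p.2 := by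
  obtain ⟨a, b⟩ := p
  simp only [ipF, Finset.mem_biUnion, Finset.mem_image, Finset.mem_filter, mem_nbrF]
  constructor
  · rintro ⟨u, hu, v, ⟨hadj, hv⟩, heq⟩
    cases heq; exact ⟨hu, hv, hadj⟩
  · rintro ⟨ha, hb, hadj⟩
    exact ⟨a, ha, b, ⟨hadj, hb⟩, rfl⟩

theorem mem_bpF {d : ℕ} {C : Finset (Fin d → ℤ)} {p : (Fin d → ℤ) × (Fin d → ℤ)} :
    p ∈ bpF C ↔ p.1 ∈ C ∧ p.2 ∉ C ∧ (ZGraph d).Adj p.1 p.2 := by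
  obtain ⟨a, b⟩ := p
  simp only [bpF, Finset.mem_biUnion, Finset.mem_image, Finset.mem_filter, mem_nbrF]
  constructor
  · rintro ⟨u, hu, v, ⟨hadj, hv⟩, heq⟩
    cases heq; exact ⟨hu, hv, hadj⟩
  · rintro ⟨ha, hb, hadj⟩
    exact ⟨a, ha, b, ⟨hadj, hb⟩, rfl⟩

theorem handshake {d : ℕ} (C : Finset (Fin d → ℤ)) :
    (ipF C).card + (bpF C).card = 2 * d * C.card := by
  classical
  have hip : (ipF C).card = ∑ u ∈ C, ((nbrF u).filter (fun v => v ∈ C)).card := by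
    rw [ipF, Finset.card_biUnion]
    · exact Finset.sum_congr rfl (fun u _ => Finset.card_image_of_injective _
        (fun a b h => (Prod.mk.injEq .. ▸ h).2))
    · intro x hx y hy hxy
      simp only [Finset.disjoint_left, Finset.mem_image]
      rintro p ⟨v, hv, rfl⟩ ⟨w, hw, hpw⟩
      exact hxy (Prod.mk.injEq .. ▸ hpw.symm).1
  have hbp : (bpF C).card = ∑ u ∈ C, ((nbrF u).filter (fun v => v ∉ C)).card := by
    rw [bpF, Finset.card_biUnion]
    · exact Finset.sum_congr rfl (fun u _ => Finset.card_image_of_injective _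
        (fun a b h => (Prod.mk.injEq .. ▸ h).2))
    · intro x hx y hy hxy
      simp only [Finset.disjoint_left, Finset.mem_image]
      rintro p ⟨v, hv, rfl⟩ ⟨w, hw, hpw⟩
      exact hxy (Prod.mk.injEq .. ▸ hpw.symm).1
  rw [hip, hbp, ← Finset.sum_add_distrib]
  have : ∀ u ∈ C, ((nbrF u).filter (fun v => v ∈ C)).card
      + ((nbrF u).filter (fun v => v ∉ C)).card = 2 * d := by
    intro u _
    rw [Finset.card_filter_add_card_filter_not, card_nbrF]
  rw [Finset.sum_congr rfl this, Finset.sum_const, smul_eq_mul, mul_comm]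

theorem zadj_diff_card {d : ℕ} {u v : Fin d → ℤ} (h : (ZGraph d).Adj u v) :
    (Finset.univ.filter (fun i => u i ≠ v i)).card = 1 := by
  classical
  obtain ⟨i, s, hs, rfl⟩ := zadj_iff.1 h
  rw [Finset.card_eq_one]
  refine ⟨i, Finset.ext fun j => ?_⟩
  simp only [Finset.mem_filter, Finset.mem_univ, true_and, Finset.mem_singleton, Pi.add_apply]
  constructor
  · intro hne
    by_contra hji
    simp [zind, hji] at hne
  · rintro rfl
    have : zind j s j = s := by simp [zind]
    rw [this]
    rcases hs with rfl | rfl <;> omega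
/-- projection deleting coordinate `i` -/
def pjF {d : ℕ} (i : Fin d) (x : Fin d → ℤ) : Fin d → ℤ := Function.update x i 0

theorem pjF_fiber {d : ℕ} {i : Fin d} {x p : Fin d → ℤ} (h : pjF i x = p) :
    x = Function.update p i (x i) := by
  funext j
  by_cases hj : j = i
  · subst hj; simp
  · have := congrFun h j
    simp only [pjF, Function.update_apply, if_neg hj] at this ⊢
    omega

theorem pjF_zero {d : ℕ} {i : Fin d} {x : Fin d → ℤ} : pjF i x i = 0 := by simp [pjF]

theorem pjF_update {d : ℕ} {i : Fin d} {p : Fin d → ℤ} (hp : p i = 0) (t : ℤ) :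
    pjF i (Function.update p i t) = p := by
  funext j
  by_cases hj : j = i
  · subst hj; simp [pjF, hp]
  · simp [pjF, Function.update_apply, if_neg hj]

theorem adj_update {d : ℕ} {i : Fin d} (p : Fin d → ℤ) (t : ℤ) {s : ℤ} (hs : s = 1 ∨ s = -1) :
    (ZGraph d).Adj (Function.update p i t) (Function.update p i (t + s)) := by
  refine zadj_iff.2 ⟨i, s, hs, ?_⟩
  funext j
  by_cases hj : j = i
  · subst hj; simp [zind]
  · simp [Function.update_apply, if_neg hj, zind, hj]

open Classical in
theorem two_proj_le_dir {d : ℕ} (i : Fin d) (C : Finset (Fin d → ℤ)) :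
    2 * (C.image (pjF i)).card ≤ ((bpF C).filter (fun p => p.1 i ≠ p.2 i)).card := by
  classical
  set P := C.image (pjF i) with hP
  set T := (bpF C).filter (fun p => p.1 i ≠ p.2 i) with hT
  -- max and min of the fiber over p in the i-th coordinate
  set tmax : (Fin d → ℤ) → ℤ :=
    fun p => WithBot.unbotD 0 (((C.filter (fun x => pjF i x = p)).image (fun x => x i)).max) with htmax
  set tmin : (Fin d → ℤ) → ℤ :=
    fun p => WithTop.untopD 0 (((C.filter (fun x => pjF i x = p)).image (fun x => x i)).min) with htmin
  set φp : (Fin d → ℤ) → ((Fin d → ℤ) × (Fin d → ℤ)) :=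
    fun p => (Function.update p i (tmax p), Function.update p i (tmax p + 1)) with hφp
  set φm : (Fin d → ℤ) → ((Fin d → ℤ) × (Fin d → ℤ)) :=
    fun p => (Function.update p i (tmin p), Function.update p i (tmin p + -1)) with hφm
  have hPzero : ∀ p ∈ P, p i = 0 := by
    intro p hp
    obtain ⟨x, -, rfl⟩ := Finset.mem_image.1 hp
    exact pjF_zero
  have hfiber : ∀ p ∈ P, ∀ t : ℤ,
      (t ∈ (C.filter (fun x => pjF i x = p)).image (fun x => x i)) ↔
        Function.update p i t ∈ C := by
    intro p hp t
    constructor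
    · rintro ht
      obtain ⟨x, hx, rfl⟩ := Finset.mem_image.1 ht
      obtain ⟨hxC, hxp⟩ := Finset.mem_filter.1 hx
      rwa [← pjF_fiber hxp]
    · intro ht
      refine Finset.mem_image.2 ⟨Function.update p i t, Finset.mem_filter.2
        ⟨ht, pjF_update (hPzero p hp) t⟩, by simp⟩
  have hmax : ∀ p ∈ P, Function.update p i (tmax p) ∈ C ∧
      Function.update p i (tmax p + 1) ∉ C := by
    intro p hp
    obtain ⟨x, hx, hxp⟩ := Finset.mem_image.1 hp
    have hne : ((C.filter (fun x => pjF i x = p)).image (fun x => x i)).Nonempty :=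
      ⟨x i, (hfiber p hp (x i)).2 (by rwa [← pjF_fiber hxp])⟩
    have heq : tmax p = ((C.filter (fun x => pjF i x = p)).image (fun x => x i)).max' hne := by
      rw [htmax]; simp only [← Finset.coe_max' hne, WithBot.unbotD_coe]
    constructor
    · have hm := Finset.max'_mem _ hne
      rw [← heq] at hm
      exact (hfiber p hp _).1 hm
    · intro hmem
      have hcoe : ((tmax p : ℤ) : WithBot ℤ)
          = ((C.filter (fun x => pjF i x = p)).image (fun x => x i)).max := by
        rw [htmax]; simp only [← Finset.coe_max' hne, WithBot.unbotD_coe]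
      have h2 := Finset.le_max ((hfiber p hp _).2 hmem)
      rw [← hcoe] at h2
      have h3 := WithBot.coe_le_coe.1 h2
      linarith
  have hmin : ∀ p ∈ P, Function.update p i (tmin p) ∈ C ∧
      Function.update p i (tmin p + -1) ∉ C := by
    intro p hp
    obtain ⟨x, hx, hxp⟩ := Finset.mem_image.1 hp
    have hne : ((C.filter (fun x => pjF i x = p)).image (fun x => x i)).Nonempty :=
      ⟨x i, (hfiber p hp (x i)).2 (by rwa [← pjF_fiber hxp])⟩
    have heq : tmin p = ((C.filter (fun x => pjF i x = p)).image (fun x => x i)).min' hne := by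
      rw [htmin]; simp only [← Finset.coe_min' hne, WithTop.untopD_coe]
    constructor
    · have hm := Finset.min'_mem _ hne
      rw [← heq] at hm
      exact (hfiber p hp _).1 hm
    · intro hmem
      have hcoe : ((tmin p : ℤ) : WithTop ℤ)
          = ((C.filter (fun x => pjF i x = p)).image (fun x => x i)).min := by
        rw [htmin]; simp only [← Finset.coe_min' hne, WithTop.untopD_coe]
      have h2 := Finset.min_le ((hfiber p hp _).2 hmem)
      rw [← hcoe] at h2
      have h3 := WithTop.coe_le_coe.1 h2
      linarith
  have hsubp : ∀ p ∈ P, φp p ∈ T := by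
    intro p hp
    refine Finset.mem_filter.2 ⟨mem_bpF.2 ⟨(hmax p hp).1, (hmax p hp).2, ?_⟩, ?_⟩
    · exact adj_update p (tmax p) (Or.inl rfl)
    · show (Function.update p i (tmax p)) i ≠ (Function.update p i (tmax p + 1)) i
      simp only [Function.update_self]; omega
  have hsubm : ∀ p ∈ P, φm p ∈ T := by
    intro p hp
    refine Finset.mem_filter.2 ⟨mem_bpF.2 ⟨(hmin p hp).1, (hmin p hp).2, ?_⟩, ?_⟩
    · exact adj_update p (tmin p) (Or.inr rfl)
    · show (Function.update p i (tmin p)) i ≠ (Function.update p i (tmin p + -1)) i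
      simp only [Function.update_self]; omega
  have hinjp : Set.InjOn φp P := by
    intro p hp q hq h
    have h0 : Function.update p i (tmax p) = Function.update q i (tmax q) := congrArg Prod.fst h
    have h1 := congrArg (pjF i) h0
    rwa [pjF_update (hPzero p (Finset.mem_coe.1 hp)), pjF_update (hPzero q (Finset.mem_coe.1 hq))]
      at h1
  have hinjm : Set.InjOn φm P := by
    intro p hp q hq h
    have h0 : Function.update p i (tmin p) = Function.update q i (tmin q) := congrArg Prod.fst h
    have h1 := congrArg (pjF i) h0
    rwa [pjF_update (hPzero p (Finset.mem_coe.1 hp)), pjF_update (hPzero q (Finset.mem_coe.1 hq))]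
      at h1
  have hdisj : Disjoint (P.image φp) (P.image φm) := by
    simp only [Finset.disjoint_left, Finset.mem_image]
    rintro q ⟨p, hp, rfl⟩ ⟨p', hp', hq⟩
    have h2 : (φm p').2 i = (φm p').1 i + -1 := by simp [hφm]
    rw [hq] at h2
    simp only [hφp, Function.update_self] at h2
    omega
  have hcardp : (P.image φp).card = P.card := Finset.card_image_of_injOn hinjp
  have hcardm : (P.image φm).card = P.card := Finset.card_image_of_injOn hinjm
  have hunion : (P.image φp) ∪ (P.image φm) ⊆ T := by
    intro q hq
    rcases Finset.mem_union.1 hq with hq | hq <;> obtain ⟨p, hp, rfl⟩ := Finset.mem_image.1 hq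
    · exact hsubp p hp
    · exact hsubm p hp
  calc 2 * P.card = (P.image φp).card + (P.image φm).card := by rw [hcardp, hcardm]; ring
    _ = ((P.image φp) ∪ (P.image φm)).card := (Finset.card_union_of_disjoint hdisj).symm
    _ ≤ T.card := Finset.card_le_card hunion
theorem amgm_nat {d : ℕ} (a : Fin d → ℕ) : d ^ d * ∏ i, a i ≤ (∑ i, a i) ^ d := by
  rcases Nat.eq_zero_or_pos d with rfl | hd
  · simp
  have hdR : (0:ℝ) < (d:ℝ) := by exact_mod_cast hd
  have hw : ∀ i ∈ (Finset.univ : Finset (Fin d)), (0:ℝ) ≤ (1 : ℝ)/(d:ℝ) := fun i _ => by positivity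
  have hw' : ∑ _i : Fin d, (1:ℝ)/(d:ℝ) = 1 := by
    rw [Finset.sum_const, Finset.card_univ, Fintype.card_fin, nsmul_eq_mul]
    field_simp
  have hz : ∀ i ∈ (Finset.univ : Finset (Fin d)), (0:ℝ) ≤ ((a i : ℕ) : ℝ) := fun i _ => by positivity
  have h := Real.geom_mean_le_arith_mean_weighted Finset.univ _ _ hw hw' hz
  have hprod : ∏ i : Fin d, ((a i : ℝ)) ^ ((1:ℝ)/(d:ℝ))
      = (∏ i : Fin d, ((a i : ℕ) : ℝ)) ^ ((1:ℝ)/(d:ℝ)) :=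
    Real.finset_prod_rpow Finset.univ _ (fun i _ => by positivity) _
  rw [hprod] at h
  have hsum : ∑ i : Fin d, (1:ℝ)/(d:ℝ) * ((a i : ℕ) : ℝ)
      = (∑ i : Fin d, ((a i : ℕ) : ℝ)) / d := by
    rw [← Finset.mul_sum]; ring
  rw [hsum] at h
  have hP0 : (0:ℝ) ≤ ∏ i : Fin d, ((a i : ℕ) : ℝ) := Finset.prod_nonneg (fun i _ => by positivity)
  have hpow := pow_le_pow_left₀ (Real.rpow_nonneg hP0 _) h d
  have hlhs : ((∏ i : Fin d, ((a i : ℕ) : ℝ)) ^ ((1:ℝ)/(d:ℝ))) ^ d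
      = ∏ i : Fin d, ((a i : ℕ) : ℝ) := by
    rw [← Real.rpow_natCast ((∏ i : Fin d, ((a i : ℕ) : ℝ)) ^ ((1:ℝ)/(d:ℝ))) d,
      ← Real.rpow_mul hP0]
    rw [one_div, inv_mul_cancel₀ (by positivity), Real.rpow_one]
  rw [hlhs, div_pow] at hpow
  have hkey : (d:ℝ) ^ d * ∏ i : Fin d, ((a i : ℕ) : ℝ)
      ≤ (∑ i : Fin d, ((a i : ℕ) : ℝ)) ^ d := by
    rw [le_div_iff₀ (by positivity)] at hpow
    calc (d:ℝ) ^ d * ∏ i : Fin d, ((a i : ℕ) : ℝ)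
        = (∏ i : Fin d, ((a i : ℕ) : ℝ)) * (d:ℝ) ^ d := by ring
      _ ≤ _ := hpow
  exact_mod_cast hkey

theorem bp_dir_sum {d : ℕ} (C : Finset (Fin d → ℤ)) :
    ∑ i, ((bpF C).filter (fun p => p.1 i ≠ p.2 i)).card = (bpF C).card := by
  classical
  calc ∑ i, ((bpF C).filter (fun p => p.1 i ≠ p.2 i)).card
      = ∑ i : Fin d, ∑ p ∈ bpF C, if p.1 i ≠ p.2 i then 1 else 0 :=
        Finset.sum_congr rfl (fun i _ => Finset.card_filter _ _)
    _ = ∑ p ∈ bpF C, ∑ i : Fin d, if p.1 i ≠ p.2 i then 1 else 0 := Finset.sum_comm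
    _ = ∑ p ∈ bpF C, 1 := Finset.sum_congr rfl (fun p hp => by
        rw [← Finset.card_filter]
        exact zadj_diff_card (mem_bpF.1 hp).2.2)
    _ = (bpF C).card := (Finset.card_eq_sum_ones _).symm

theorem sum_proj_sq {d : ℕ} (hd : 2 ≤ d) (C : Finset (Fin d → ℤ)) :
    d ^ 2 * C.card ≤ (∑ i, (C.image (pjF i)).card) ^ 2 := by
  classical
  have : NeZero d := ⟨by omega⟩
  set a : Fin d → ℕ := fun i => (C.image (pjF i)).card with ha
  set w : Fin d → ℕ := fun i => (C.image (fun x => x i)).card with hw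
  have h1 : ∀ i, C.card ≤ a i * w i := by
    intro i
    have hinj : Set.InjOn (fun x => (pjF i x, x i)) C := by
      intro x _ y _ hxy
      have hfst : pjF i x = pjF i y := congrArg Prod.fst hxy
      have hsnd : x i = y i := congrArg Prod.snd hxy
      have hx' : x = Function.update (pjF i y) i (x i) := pjF_fiber hfst
      have hy' : y = Function.update (pjF i y) i (y i) := pjF_fiber rfl
      rw [hsnd] at hx'
      exact hx'.trans hy'.symm
    have hmap : ∀ x ∈ C, (pjF i x, x i) ∈ (C.image (pjF i)) ×ˢ (C.image (fun x => x i)) :=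
      fun x hx => Finset.mem_product.2
        ⟨Finset.mem_image_of_mem _ hx, Finset.mem_image_of_mem _ hx⟩
    have := Finset.card_le_card_of_injOn _ hmap hinj
    rwa [Finset.card_product] at this
  have h2 : ∀ i j : Fin d, j ≠ i → w j ≤ a i := by
    intro i j hji
    have himg : (C.image (pjF i)).image (fun x => x j) = C.image (fun x => x j) := by
      rw [Finset.image_image]
      apply Finset.image_congr
      intro x _
      simp [Function.comp, pjF, Function.update_apply, hji]
    calc w j = ((C.image (pjF i)).image (fun x => x j)).card := by rw [himg]
      _ ≤ a i := Finset.card_image_le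
  have h3 : ∏ i, w i ≤ ∏ i, a i := by
    have hcyc : ∏ i, w i = ∏ i, w (i + 1) :=
      (Fintype.prod_equiv (Equiv.addRight (1 : Fin d)) (fun i => w (i + 1)) w
        (fun i => rfl)).symm
    rw [hcyc]
    apply Finset.prod_le_prod'
    intro i _
    apply h2 i (i + 1)
    intro hcontra
    have h10 : (1 : Fin d) = 0 := by
      have := hcontra.trans (add_zero i).symm
      exact add_left_cancel this
    rw [Fin.one_eq_zero_iff] at h10
    omega
  have h4 : C.card ^ d ≤ (∏ i, a i) * (∏ i, a i) := by
    calc C.card ^ d = ∏ _i : Fin d, C.card := by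
          rw [Finset.prod_const, Finset.card_univ, Fintype.card_fin]
      _ ≤ ∏ i, (a i * w i) := Finset.prod_le_prod' (fun i _ => h1 i)
      _ = (∏ i, a i) * (∏ i, w i) := Finset.prod_mul_distrib
      _ ≤ (∏ i, a i) * (∏ i, a i) := Nat.mul_le_mul_left _ h3
  have h5 := amgm_nat a
  have h6 : (d ^ 2 * C.card) ^ d ≤ ((∑ i, a i) ^ 2) ^ d := by
    calc (d ^ 2 * C.card) ^ d = (d^d)*(d^d) * C.card ^ d := by ring
      _ ≤ (d^d)*(d^d) * ((∏ i, a i) * (∏ i, a i)) := Nat.mul_le_mul_left _ h4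
      _ = (d^d * ∏ i, a i) * (d^d * ∏ i, a i) := by ring
      _ ≤ (∑ i, a i)^d * (∑ i, a i)^d := Nat.mul_le_mul h5 h5
      _ = ((∑ i, a i)^2)^d := by ring
  exact (Nat.pow_le_pow_iff_left (by omega)).1 h6

theorem dsq_le (d : ℕ) : d ^ 2 ≤ 4 * 2 ^ d := by
  induction d with
  | zero => simp
  | succ n ih =>
    have h1 : n < 2 ^ n := Nat.lt_two_pow_self
    have h2 : 2 ^ (n + 1) = 2 * 2 ^ n := by ring
    nlinarith

theorem big_bp {d : ℕ} (hd : 2 ≤ d) {C : Finset (Fin d → ℤ)} (hC : 2 ^ d ≤ C.card) :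
    d ^ 2 ≤ (bpF C).card := by
  have h1 : 2 * ∑ i, (C.image (pjF i)).card ≤ (bpF C).card := by
    calc 2 * ∑ i, (C.image (pjF i)).card = ∑ i, 2 * (C.image (pjF i)).card := Finset.mul_sum ..
      _ ≤ ∑ i, ((bpF C).filter (fun p => p.1 i ≠ p.2 i)).card :=
          Finset.sum_le_sum (fun i _ => two_proj_le_dir i C)
      _ = (bpF C).card := bp_dir_sum C
  have h2 := sum_proj_sq hd C
  have h3 : (d^2)^2 ≤ (bpF C).card ^ 2 := by
    have hd4 := dsq_le d
    calc (d^2)^2 = d^2 * d^2 := by ring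
      _ ≤ d^2 * (4 * 2^d) := Nat.mul_le_mul_left _ hd4
      _ = 4 * (d^2 * 2^d) := by ring
      _ ≤ 4 * (d^2 * C.card) := Nat.mul_le_mul_left _ (Nat.mul_le_mul_left _ hC)
      _ ≤ 4 * (∑ i, (C.image (pjF i)).card) ^ 2 := Nat.mul_le_mul_left _ h2
      _ = (2 * ∑ i, (C.image (pjF i)).card) ^ 2 := by ring
      _ ≤ (bpF C).card ^ 2 := Nat.pow_le_pow_left h1 2
  exact (Nat.pow_le_pow_iff_left (by omega)).1 h3
theorem log2_lin {x : ℝ} (h0 : 0 ≤ x) (h1 : x ≤ 1) : x * Real.log 2 ≤ Real.log (1 + x) := by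
  have hc := (strictConcaveOn_log_Ioi.concaveOn).2 (Set.mem_Ioi.2 one_pos)
      (Set.mem_Ioi.2 two_pos) (by linarith : (0:ℝ) ≤ 1 - x) h0 (by ring)
  simp only [smul_eq_mul, Real.log_one, mul_zero, zero_add] at hc
  have heq : (1 - x) * 1 + x * 2 = 1 + x := by ring
  rw [heq] at hc
  exact hc

theorem loglem {a b : ℕ} (ha : 1 ≤ a) (hab : a ≤ b) :
    (a : ℝ) * Real.log a + b * Real.log b + 2 * a * Real.log 2
      ≤ ((a : ℝ) + b) * Real.log ((a : ℝ) + b) := by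
  have ha' : (0:ℝ) < a := by exact_mod_cast ha
  have hb' : (0:ℝ) < b := by exact_mod_cast lt_of_lt_of_le ha hab
  have habR : (a:ℝ) ≤ b := by exact_mod_cast hab
  have h1 : (a:ℝ) * Real.log 2 + a * Real.log a ≤ a * Real.log ((a:ℝ) + b) := by
    have hd : Real.log (((a:ℝ) + b)/a) = Real.log ((a:ℝ) + b) - Real.log a :=
      Real.log_div (by positivity) (by positivity)
    have h2' : (2:ℝ) ≤ ((a:ℝ) + b)/a := by
      rw [le_div_iff₀ ha']; linarith
    have hlog := Real.log_le_log (by norm_num) h2'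
    have hml := mul_le_mul_of_nonneg_left hlog (le_of_lt ha')
    rw [hd] at hml
    nlinarith [hml]
  have h2 : (a:ℝ) * Real.log 2 + b * Real.log b ≤ b * Real.log ((a:ℝ) + b) := by
    have hd : Real.log (1 + (a:ℝ)/b) = Real.log ((a:ℝ) + b) - Real.log b := by
      rw [← Real.log_div (by positivity) (by positivity)]
      congr 1
      field_simp
      ring
    have hx0 : 0 ≤ (a:ℝ)/b := by positivity
    have hx1 : (a:ℝ)/b ≤ 1 := by rw [div_le_one hb']; exact habR
    have hlin := log2_lin hx0 hx1
    have hml := mul_le_mul_of_nonneg_left hlin (le_of_lt hb')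
    rw [hd] at hml
    have hab2 : (b:ℝ) * ((a:ℝ)/b * Real.log 2) = a * Real.log 2 := by
      field_simp
    rw [hab2] at hml
    nlinarith [hml]
  nlinarith [h1, h2]

theorem cross_determined {d : ℕ} {u v : Fin d → ℤ} {i : Fin d} (h : (ZGraph d).Adj u v)
    (hlt : u i < v i) : v = u + zind i 1 := by
  obtain ⟨j, s, hs, rfl⟩ := zadj_iff.1 h
  have hne : u i ≠ (u + zind j s) i := ne_of_lt hlt
  simp only [Pi.add_apply] at hne hlt
  by_cases hij : i = j
  · subst hij
    have hz : zind i s i = s := by simp [zind]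
    rw [hz] at hlt
    have : s = 1 := by rcases hs with rfl | rfl; rfl; omega
    subst this
    rfl
  · exfalso
    apply hne
    simp [zind, hij]

theorem harper {d : ℕ} (C : Finset (Fin d → ℤ)) :
    ((ipF C).card : ℝ) * Real.log 2 ≤ (C.card : ℝ) * Real.log (C.card) := by
  classical
  induction C using Finset.strongInduction with
  | _ C ih =>
  by_cases hsmall : C.card ≤ 1
  · have hip : ipF C = ∅ := by
      rw [Finset.eq_empty_iff_forall_notMem]
      intro p hp
      obtain ⟨h1, h2, h3⟩ := mem_ipF.1 hp
      exact h3.ne (Finset.card_le_one.1 hsmall _ h1 _ h2)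
    rw [hip]
    simp only [Finset.card_empty, Nat.cast_zero, zero_mul]
    have := Real.log_natCast_nonneg C.card
    positivity
  -- C has at least two elements
  push_neg at hsmall
  obtain ⟨x, hx, y, hy, hxy⟩ := Finset.one_lt_card.1 hsmall
  obtain ⟨i, hi⟩ := Function.ne_iff.1 hxy
  have hCne : (C.image (fun z => z i)).Nonempty := ⟨x i, Finset.mem_image_of_mem _ hx⟩
  set t := (C.image (fun z => z i)).min' hCne with ht
  have hmin_le : ∀ z ∈ C, t ≤ z i := fun z hz =>
    Finset.min'_le _ _ (Finset.mem_image_of_mem _ hz)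
  have htmem : ∃ z ∈ C, z i = t := by
    obtain ⟨z, hz, hzt⟩ := Finset.mem_image.1 (Finset.min'_mem _ hCne)
    exact ⟨z, hz, hzt⟩
  clear_value t
  clear ht
  set C0 := C.filter (fun z => z i ≤ t) with hC0
  set C1 := C.filter (fun z => ¬ z i ≤ t) with hC1
  have hC0ne : C0.Nonempty := by
    obtain ⟨z, hz, hzt⟩ := htmem
    exact ⟨z, Finset.mem_filter.2 ⟨hz, le_of_eq hzt⟩⟩
  have hC1ne : C1.Nonempty := by
    rcases eq_or_ne (x i) t with hxt | hxt
    · refine ⟨y, Finset.mem_filter.2 ⟨hy, ?_⟩⟩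
      have := hmin_le y hy
      omega
    · refine ⟨x, Finset.mem_filter.2 ⟨hx, ?_⟩⟩
      have := hmin_le x hx
      omega
  have hcards : C0.card + C1.card = C.card := Finset.card_filter_add_card_filter_not _
  have hsub0 : C0 ⊂ C := Finset.filter_ssubset.2 ⟨_, (Finset.mem_filter.1 hC1ne.choose_spec).1,
    (Finset.mem_filter.1 hC1ne.choose_spec).2⟩
  have hsub1 : C1 ⊂ C := Finset.filter_ssubset.2 ⟨_, (Finset.mem_filter.1 hC0ne.choose_spec).1,
    by
      have := (Finset.mem_filter.1 hC0ne.choose_spec).2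
      simp only [not_not]
      omega⟩
  have ih0 := ih C0 hsub0
  have ih1 := ih C1 hsub1
  -- decompose the internal pairs
  set A := (ipF C).filter (fun p => p.1 i ≤ t ∧ p.2 i ≤ t) with hA
  set D := (ipF C).filter (fun p => ¬ p.1 i ≤ t ∧ ¬ p.2 i ≤ t) with hD
  set X01 := (ipF C).filter (fun p => p.1 i ≤ t ∧ ¬ p.2 i ≤ t) with hX01
  set X10 := (ipF C).filter (fun p => ¬ p.1 i ≤ t ∧ p.2 i ≤ t) with hX10
  have hcover : ipF C ⊆ A ∪ D ∪ X01 ∪ X10 := by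
    intro p hp
    simp only [hA, hD, hX01, hX10, Finset.mem_union, Finset.mem_filter]
    by_cases h1 : p.1 i ≤ t <;> by_cases h2 : p.2 i ≤ t <;> tauto
  have hAsub : A ⊆ ipF C0 := by
    intro p hp
    obtain ⟨hpC, hp1, hp2⟩ := Finset.mem_filter.1 hp
    obtain ⟨hq1, hq2, hq3⟩ := mem_ipF.1 hpC
    exact mem_ipF.2 ⟨Finset.mem_filter.2 ⟨hq1, hp1⟩, Finset.mem_filter.2 ⟨hq2, hp2⟩, hq3⟩
  have hDsub : D ⊆ ipF C1 := by
    intro p hp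
    obtain ⟨hpC, hp1, hp2⟩ := Finset.mem_filter.1 hp
    obtain ⟨hq1, hq2, hq3⟩ := mem_ipF.1 hpC
    exact mem_ipF.2 ⟨Finset.mem_filter.2 ⟨hq1, hp1⟩, Finset.mem_filter.2 ⟨hq2, hp2⟩, hq3⟩
  have hX01a : X01.card ≤ C0.card := by
    apply Finset.card_le_card_of_injOn (fun p => p.1)
    · intro p hp
      obtain ⟨hpC, hp1, _⟩ := Finset.mem_filter.1 hp
      exact Finset.mem_filter.2 ⟨(mem_ipF.1 hpC).1, hp1⟩
    · intro p hp q hq hpq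
      obtain ⟨hpC, hp1, hp2⟩ := Finset.mem_filter.1 (Finset.mem_coe.1 hp)
      obtain ⟨hqC, hq1, hq2⟩ := Finset.mem_filter.1 (Finset.mem_coe.1 hq)
      have hpd : p.2 = p.1 + zind i 1 :=
        cross_determined (mem_ipF.1 hpC).2.2 (by omega)
      have hqd : q.2 = q.1 + zind i 1 :=
        cross_determined (mem_ipF.1 hqC).2.2 (by omega)
      have hpq' : p.1 = q.1 := hpq
      have : p.2 = q.2 := by rw [hpd, hqd, hpq']
      exact Prod.ext hpq' this
  have hX01b : X01.card ≤ C1.card := by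
    apply Finset.card_le_card_of_injOn (fun p => p.2)
    · intro p hp
      obtain ⟨hpC, _, hp2⟩ := Finset.mem_filter.1 hp
      exact Finset.mem_filter.2 ⟨(mem_ipF.1 hpC).2.1, hp2⟩
    · intro p hp q hq hpq
      obtain ⟨hpC, hp1, hp2⟩ := Finset.mem_filter.1 (Finset.mem_coe.1 hp)
      obtain ⟨hqC, hq1, hq2⟩ := Finset.mem_filter.1 (Finset.mem_coe.1 hq)
      have hpd : p.2 = p.1 + zind i 1 :=
        cross_determined (mem_ipF.1 hpC).2.2 (by omega)
      have hqd : q.2 = q.1 + zind i 1 :=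
        cross_determined (mem_ipF.1 hqC).2.2 (by omega)
      have hpq' : p.2 = q.2 := hpq
      have : p.1 = q.1 := by
        have h1 : p.1 + zind i 1 = q.1 + zind i 1 := by rw [← hpd, ← hqd, hpq']
        exact add_right_cancel h1
      exact Prod.ext this hpq'
  have hX10a : X10.card ≤ C1.card := by
    apply Finset.card_le_card_of_injOn (fun p => p.1)
    · intro p hp
      obtain ⟨hpC, hp1, _⟩ := Finset.mem_filter.1 hp
      exact Finset.mem_filter.2 ⟨(mem_ipF.1 hpC).1, hp1⟩
    · intro p hp q hq hpq
      obtain ⟨hpC, hp1, hp2⟩ := Finset.mem_filter.1 (Finset.mem_coe.1 hp)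
      obtain ⟨hqC, hq1, hq2⟩ := Finset.mem_filter.1 (Finset.mem_coe.1 hq)
      have hpd : p.1 = p.2 + zind i 1 :=
        cross_determined (SimpleGraph.Adj.symm (mem_ipF.1 hpC).2.2) (by omega)
      have hqd : q.1 = q.2 + zind i 1 :=
        cross_determined (SimpleGraph.Adj.symm (mem_ipF.1 hqC).2.2) (by omega)
      have hpq' : p.1 = q.1 := hpq
      have : p.2 = q.2 := by
        have h1 : p.2 + zind i 1 = q.2 + zind i 1 := by rw [← hpd, ← hqd, hpq']
        exact add_right_cancel h1
      exact Prod.ext hpq' this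
  have hX10b : X10.card ≤ C0.card := by
    apply Finset.card_le_card_of_injOn (fun p => p.2)
    · intro p hp
      obtain ⟨hpC, _, hp2⟩ := Finset.mem_filter.1 hp
      exact Finset.mem_filter.2 ⟨(mem_ipF.1 hpC).2.1, hp2⟩
    · intro p hp q hq hpq
      obtain ⟨hpC, hp1, hp2⟩ := Finset.mem_filter.1 (Finset.mem_coe.1 hp)
      obtain ⟨hqC, hq1, hq2⟩ := Finset.mem_filter.1 (Finset.mem_coe.1 hq)
      have hpd : p.1 = p.2 + zind i 1 :=
        cross_determined (SimpleGraph.Adj.symm (mem_ipF.1 hpC).2.2) (by omega)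
      have hqd : q.1 = q.2 + zind i 1 :=
        cross_determined (SimpleGraph.Adj.symm (mem_ipF.1 hqC).2.2) (by omega)
      have hpq' : p.2 = q.2 := hpq
      have : p.1 = q.1 := by rw [hpd, hqd, hpq']
      exact Prod.ext this hpq'
  have hipbound : (ipF C).card ≤ (ipF C0).card + (ipF C1).card + (X01.card + X10.card) := by
    calc (ipF C).card ≤ (A ∪ D ∪ X01 ∪ X10).card := Finset.card_le_card hcover
      _ ≤ (A ∪ D ∪ X01).card + X10.card := Finset.card_union_le _ _
      _ ≤ (A ∪ D).card + X01.card + X10.card := by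
          have := Finset.card_union_le (A ∪ D) X01
          omega
      _ ≤ A.card + D.card + X01.card + X10.card := by
          have := Finset.card_union_le A D
          omega
      _ ≤ (ipF C0).card + (ipF C1).card + (X01.card + X10.card) := by
          have h1 := Finset.card_le_card hAsub
          have h2 := Finset.card_le_card hDsub
          omega
  -- real arithmetic conclusion
  have hlog2 : (0:ℝ) < Real.log 2 := Real.log_pos (by norm_num)
  have hm0 : 1 ≤ C0.card := hC0ne.card_pos
  have hm1 : 1 ≤ C1.card := hC1ne.card_pos
  rw [show (C.card : ℝ) = ((C0.card : ℝ) + C1.card) from by exact_mod_cast hcards.symm]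
  have hipR : ((ipF C).card : ℝ) ≤ ((ipF C0).card : ℝ) + ((ipF C1).card : ℝ)
      + (((X01.card : ℕ) : ℝ) + ((X10.card : ℕ) : ℝ)) := by exact_mod_cast hipbound
  have hA' := mul_le_mul_of_nonneg_right hipR (le_of_lt hlog2)
  rcases le_total C0.card C1.card with hmm | hmm
  · have hcross2 : ((X01.card : ℕ) : ℝ) + ((X10.card : ℕ) : ℝ) ≤ 2 * (C0.card : ℝ) := by
      have : X01.card + X10.card ≤ 2 * C0.card := by omega
      exact_mod_cast this
    have hll := loglem hm0 hmm
    have hB' := mul_le_mul_of_nonneg_right hcross2 (le_of_lt hlog2)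
    linarith [ih0, ih1, hll, hA', hB']
  · have hcross2 : ((X01.card : ℕ) : ℝ) + ((X10.card : ℕ) : ℝ) ≤ 2 * (C1.card : ℝ) := by
      have : X01.card + X10.card ≤ 2 * C1.card := by omega
      exact_mod_cast this
    have hll' := loglem hm1 hmm
    have hll : (C1.card : ℝ) * Real.log C1.card + (C0.card : ℝ) * Real.log C0.card
        + 2 * (C1.card : ℝ) * Real.log 2
        ≤ ((C0.card : ℝ) + C1.card) * Real.log ((C0.card : ℝ) + C1.card) := by
      rw [show ((C0.card:ℝ) + C1.card) = ((C1.card:ℝ) + C0.card) from by ring]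
      exact hll'
    have hB' := mul_le_mul_of_nonneg_right hcross2 (le_of_lt hlog2)
    linarith [ih0, ih1, hll, hA', hB']

theorem small_bp {d : ℕ} {C : Finset (Fin d → ℤ)} (hC : C.card ≤ 2 ^ d) :
    d * C.card ≤ (bpF C).card := by
  have hh := harper C
  have hlog2 : (0:ℝ) < Real.log 2 := Real.log_pos (by norm_num)
  have hlogm : Real.log (C.card) ≤ d * Real.log 2 := by
    rcases Nat.eq_zero_or_pos C.card with h0 | h0
    · rw [h0]
      simp only [Nat.cast_zero, Real.log_zero]
      positivity
    · calc Real.log (C.card) ≤ Real.log ((2:ℝ)^d) := by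
            apply Real.log_le_log (by exact_mod_cast h0)
            exact_mod_cast hC
        _ = d * Real.log 2 := by rw [Real.log_pow]
  have hipR : ((ipF C).card : ℝ) ≤ (d : ℝ) * C.card := by
    by_contra hcon
    push_neg at hcon
    have h1 : (C.card : ℝ) * Real.log C.card ≤ (C.card : ℝ) * ((d:ℝ) * Real.log 2) :=
      mul_le_mul_of_nonneg_left hlogm (by positivity)
    nlinarith
  have hip : (ipF C).card ≤ d * C.card := by exact_mod_cast hipR
  have hhs := handshake C
  have h2 : (ipF C).card + (bpF C).card = d * C.card + d * C.card := by
    rw [hhs]; ring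
  omega
/-- The lattice graph with all edges touching `W` removed. -/
def GW (d : ℕ) (W : Set (Fin d → ℤ)) : SimpleGraph (Fin d → ℤ) where
  Adj u v := (ZGraph d).Adj u v ∧ u ∉ W ∧ v ∉ W
  symm := by constructor; rintro u v ⟨h, hu, hv⟩; exact ⟨SimpleGraph.Adj.symm h, hv, hu⟩
  loopless := by constructor; rintro u ⟨h, -⟩; exact h.ne rfl

/-- The vertex set of a connected component. -/
def csetW {d : ℕ} {W : Set (Fin d → ℤ)} (c : (GW d W).ConnectedComponent) :
    Set (Fin d → ℤ) := {v | (GW d W).connectedComponentMk v = c}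

theorem mem_csetW_mk {d : ℕ} {W : Set (Fin d → ℤ)} (v : Fin d → ℤ) :
    v ∈ csetW ((GW d W).connectedComponentMk v) := rfl

theorem csetW_reach {d : ℕ} {W : Set (Fin d → ℤ)} {c : (GW d W).ConnectedComponent}
    {u v : Fin d → ℤ} (hu : u ∈ csetW c) (hv : v ∈ csetW c) : (GW d W).Reachable u v := by
  have h : (GW d W).connectedComponentMk u = (GW d W).connectedComponentMk v := by
    rw [hu, hv]
  exact (SimpleGraph.ConnectedComponent.eq).1 h

theorem gw_reach_eq {d : ℕ} {W : Set (Fin d → ℤ)} {u v : Fin d → ℤ}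
    (h : (GW d W).Reachable u v) (hu : u ∈ W) : u = v := by
  obtain ⟨w⟩ := h
  cases w with
  | nil => rfl
  | cons h' p => exact absurd hu h'.2.1

theorem gw_invariant {d : ℕ} {W S : Set (Fin d → ℤ)}
    (hS : ∀ u v : Fin d → ℤ, (ZGraph d).Adj u v → u ∉ W → v ∉ W → (u ∈ S ↔ v ∈ S))
    {u v : Fin d → ℤ} (h : (GW d W).Reachable u v) : u ∈ S ↔ v ∈ S := by
  obtain ⟨w⟩ := h
  induction w with
  | nil => exact Iff.rfl
  | cons h' p ih => exact (hS _ _ h'.1 h'.2.1 h'.2.2).trans ih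

/-- A component is good if it avoids `W`. -/
def GoodC {d : ℕ} {W : Set (Fin d → ℤ)} (c : (GW d W).ConnectedComponent) : Prop :=
  ∀ u ∈ csetW c, u ∉ W

theorem good_of_not_mem {d : ℕ} {W : Set (Fin d → ℤ)} {v : Fin d → ℤ} (hv : v ∉ W) :
    GoodC ((GW d W).connectedComponentMk v) := by
  intro u hu huW
  have hr : (GW d W).Reachable u v := csetW_reach hu (mem_csetW_mk v)
  exact hv (gw_reach_eq hr huW ▸ huW)

theorem csetW_closure {d : ℕ} {W : Set (Fin d → ℤ)} {c : (GW d W).ConnectedComponent}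
    {u v : Fin d → ℤ} (hu : u ∈ csetW c) (huW : u ∉ W) (hvW : v ∉ W)
    (hadj : (ZGraph d).Adj u v) : v ∈ csetW c := by
  have hadj' : (GW d W).Adj v u := ⟨SimpleGraph.Adj.symm hadj, hvW, huW⟩
  have : (GW d W).connectedComponentMk v = (GW d W).connectedComponentMk u :=
    (SimpleGraph.ConnectedComponent.eq).2 hadj'.reachable
  rw [csetW, Set.mem_setOf_eq, this]
  exact hu

open Classical in
/-- The component as a finset (junk value for infinite components). -/
noncomputable def cFin {d : ℕ} {W : Set (Fin d → ℤ)} (c : (GW d W).ConnectedComponent) :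
    Finset (Fin d → ℤ) :=
  if h : (csetW c).Finite then h.toFinset else ∅

theorem mem_cFin {d : ℕ} {W : Set (Fin d → ℤ)} {c : (GW d W).ConnectedComponent}
    (h : (csetW c).Finite) {v : Fin d → ℤ} : v ∈ cFin c ↔ v ∈ csetW c := by
  rw [cFin, dif_pos h, Set.Finite.mem_toFinset]

/-- Big components: good, finite, of size at least `2^d`. -/
def BigC (d : ℕ) (W : Set (Fin d → ℤ)) : Set ((GW d W).ConnectedComponent) :=
  {c | GoodC c ∧ (csetW c).Finite ∧ 2 ^ d ≤ (cFin c).card}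

/-- Small components: good, finite, of size less than `2^d`. -/
def SmallC (d : ℕ) (W : Set (Fin d → ℤ)) : Set ((GW d W).ConnectedComponent) :=
  {c | GoodC c ∧ (csetW c).Finite ∧ (cFin c).card < 2 ^ d}

/-- Infinite components. -/
def InfC (d : ℕ) (W : Set (Fin d → ℤ)) : Set ((GW d W).ConnectedComponent) :=
  {c | GoodC c ∧ ¬ (csetW c).Finite}

theorem bp_mem_W {d : ℕ} {W : Set (Fin d → ℤ)} {c : (GW d W).ConnectedComponent}
    (hg : GoodC c) (hfin : (csetW c).Finite) {p : (Fin d → ℤ) × (Fin d → ℤ)}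
    (hp : p ∈ bpF (cFin c)) : p.1 ∈ csetW c ∧ p.2 ∈ W := by
  obtain ⟨h1, h2, h3⟩ := mem_bpF.1 hp
  have h1' : p.1 ∈ csetW c := (mem_cFin hfin).1 h1
  refine ⟨h1', ?_⟩
  by_contra hW
  exact h2 ((mem_cFin hfin).2 (csetW_closure h1' (hg _ h1') hW h3))

theorem cFin_nonempty {d : ℕ} {W : Set (Fin d → ℤ)} {c : (GW d W).ConnectedComponent}
    (hfin : (csetW c).Finite) : (cFin c).Nonempty := by
  obtain ⟨v, hv⟩ := c.exists_rep
  exact ⟨v, (mem_cFin hfin).2 (by rw [← hv]; exact mem_csetW_mk v)⟩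
/-- The inner set of the approximation built from a set of big components. -/
def innSet (d : ℕ) (W : Set (Fin d → ℤ)) (κ : Set ((GW d W).ConnectedComponent)) :
    Set (Fin d → ℤ) :=
  ((GW d W).connectedComponentMk ⁻¹' (κ ∩ BigC d W)) ∪
    {w | w ∈ W ∧ OddVert w ∧ ∃ v, EvenVert v ∧
      v ∈ (GW d W).connectedComponentMk ⁻¹' (κ ∩ BigC d W) ∧ (ZGraph d).Adj w v}

/-- The outer set of the approximation built from a set of big components. -/
def outSet (d : ℕ) (W : Set (Fin d → ℤ)) (κ : Set ((GW d W).ConnectedComponent)) :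
    Set (Fin d → ℤ) :=
  ((GW d W).connectedComponentMk ⁻¹' (InfC d W ∪ (BigC d W \ κ))) ∪
    {w | w ∈ W ∧ EvenVert w ∧ ∃ v, OddVert v ∧
      v ∈ (GW d W).connectedComponentMk ⁻¹' (InfC d W ∪ (BigC d W \ κ)) ∧ (ZGraph d).Adj w v}

theorem innSet_pre_not_W {d : ℕ} {W : Set (Fin d → ℤ)} {κ : Set ((GW d W).ConnectedComponent)}
    {v : Fin d → ℤ} (h : v ∈ (GW d W).connectedComponentMk ⁻¹' (κ ∩ BigC d W)) : v ∉ W :=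
  (Set.mem_preimage.1 h).2.1 _ (mem_csetW_mk v)

theorem outSet_pre_not_W {d : ℕ} {W : Set (Fin d → ℤ)} {κ : Set ((GW d W).ConnectedComponent)}
    {v : Fin d → ℤ}
    (h : v ∈ (GW d W).connectedComponentMk ⁻¹' (InfC d W ∪ (BigC d W \ κ))) : v ∉ W := by
  rcases Set.mem_preimage.1 h with h' | h'
  · exact h'.1 _ (mem_csetW_mk v)
  · exact h'.1.1 _ (mem_csetW_mk v)

theorem innSet_odd {d : ℕ} (W : Set (Fin d → ℤ)) (κ : Set ((GW d W).ConnectedComponent)) :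
    IsOddSet d (innSet d W κ) := by
  rintro u ⟨hu, v, hadj, hv⟩
  rcases hu with hpre | hadd
  · rcases evenVert_or_oddVert u with heven | hodd
    · exfalso
      have huW : u ∉ W := innSet_pre_not_W hpre
      by_cases hvW : v ∈ W
      · have hvodd : OddVert v := (zadj_even_odd hadj).1 heven
        exact hv (Or.inr ⟨hvW, hvodd, u, heven, hpre, SimpleGraph.Adj.symm hadj⟩)
      · have hvc : v ∈ csetW ((GW d W).connectedComponentMk u) :=
          csetW_closure (mem_csetW_mk u) huW hvW hadj
        have : v ∈ (GW d W).connectedComponentMk ⁻¹' (κ ∩ BigC d W) := by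
          rw [Set.mem_preimage, hvc]
          exact Set.mem_preimage.1 hpre
        exact hv (Or.inl this)
    · exact hodd
  · exact hadd.2.1

theorem outSet_even {d : ℕ} (W : Set (Fin d → ℤ)) (κ : Set ((GW d W).ConnectedComponent)) :
    IsEvenSet d (outSet d W κ) := by
  rintro u ⟨hu, v, hadj, hv⟩
  rcases hu with hpre | hadd
  · rcases evenVert_or_oddVert u with heven | hodd
    · exact heven
    · exfalso
      have huW : u ∉ W := outSet_pre_not_W hpre
      by_cases hvW : v ∈ W
      · have hveven : EvenVert v := (zadj_odd_even hadj).1 hodd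
        exact hv (Or.inr ⟨hvW, hveven, u, hodd, hpre, SimpleGraph.Adj.symm hadj⟩)
      · have hvc : v ∈ csetW ((GW d W).connectedComponentMk u) :=
          csetW_closure (mem_csetW_mk u) huW hvW hadj
        have : v ∈ (GW d W).connectedComponentMk ⁻¹' (InfC d W ∪ (BigC d W \ κ)) := by
          rw [Set.mem_preimage, hvc]
          exact Set.mem_preimage.1 hpre
        exact hv (Or.inl this)
  · exact hadd.2.1

theorem inn_out_disjoint {d : ℕ} (W : Set (Fin d → ℤ)) (κ : Set ((GW d W).ConnectedComponent)) :
    Disjoint (innSet d W κ) (outSet d W κ) := by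
  rw [Set.disjoint_left]
  rintro x (hpre | hadd) (hpre' | hadd')
  · rcases Set.mem_preimage.1 hpre' with hinf | hbig
    · exact hinf.2 (Set.mem_preimage.1 hpre).2.2.1
    · exact hbig.2 (Set.mem_preimage.1 hpre).1
  · exact innSet_pre_not_W hpre hadd'.1
  · exact outSet_pre_not_W hpre' hadd.1
  · exact not_evenVert_oddVert hadd'.2.1 hadd.2.1

open Classical in
/-- The approximation built from a set of big components. -/
noncomputable def Abuild (d : ℕ) (W : Set (Fin d → ℤ))
    (κ : Set ((GW d W).ConnectedComponent)) : Approx d where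
  inn := innSet d W κ
  out := outSet d W κ
  disj := inn_out_disjoint W κ
  inn_odd := innSet_odd W κ
  out_even := outSet_even W κ

theorem abuild_star_subset {d : ℕ} (W : Set (Fin d → ℤ))
    (κ : Set ((GW d W).ConnectedComponent)) :
    (Abuild d W κ).star ⊆ W ∪ ((GW d W).connectedComponentMk ⁻¹' SmallC d W) := by
  intro v hv
  by_cases hvW : v ∈ W
  · exact Or.inl hvW
  by_cases hvSm : v ∈ (GW d W).connectedComponentMk ⁻¹' SmallC d W
  · exact Or.inr hvSm
  exfalso
  have hgood : GoodC ((GW d W).connectedComponentMk v) := good_of_not_mem hvW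
  have hv' : v ∉ innSet d W κ ∪ outSet d W κ := hv
  apply hv'
  by_cases hfin : (csetW ((GW d W).connectedComponentMk v)).Finite
  · by_cases hcard : (cFin ((GW d W).connectedComponentMk v)).card < 2 ^ d
    · exact absurd (Set.mem_preimage.2 (show _ ∈ SmallC d W from ⟨hgood, hfin, hcard⟩)) hvSm
    · have hbig : (GW d W).connectedComponentMk v ∈ BigC d W :=
        Set.mem_setOf_eq ▸ ⟨hgood, hfin, by omega⟩
      by_cases hκ : (GW d W).connectedComponentMk v ∈ κ
      · exact Or.inl (Or.inl (Set.mem_preimage.2 ⟨hκ, hbig⟩))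
      · exact Or.inr (Or.inl (Set.mem_preimage.2 (Or.inr ⟨hbig, hκ⟩)))
  · exact Or.inr (Or.inl (Set.mem_preimage.2 (Or.inl (show _ ∈ InfC d W from ⟨hgood, hfin⟩))))

theorem abuild_approximates {d : ℕ} {W S : Set (Fin d → ℤ)} (hS : S.Finite)
    (hodd : IsOddSet d S) (hsep : Separates d W S)
    {κ : Set ((GW d W).ConnectedComponent)}
    (hκ1 : ∀ c ∈ κ, c ∈ BigC d W ∧ csetW c ⊆ S)
    (hκ2 : ∀ c ∈ BigC d W, csetW c ⊆ S → c ∈ κ) :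
    Approximates (Abuild d W κ) S := by
  have hinv : ∀ u v : Fin d → ℤ, (ZGraph d).Adj u v → u ∉ W → v ∉ W → (u ∈ S ↔ v ∈ S) := by
    intro u v hadj huW hvW
    constructor
    · intro huS
      by_contra hvS
      rcases hsep u v ⟨u, v, hadj, huS, hvS, rfl⟩ with h | h
      · exact huW h
      · exact hvW h
    · intro hvS
      by_contra huS
      rcases hsep v u ⟨v, u, SimpleGraph.Adj.symm hadj, hvS, huS, rfl⟩ with h | h
      · exact hvW h
      · exact huW h
  have hconst : ∀ v : Fin d → ℤ, v ∈ S → v ∉ W →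
      csetW ((GW d W).connectedComponentMk v) ⊆ S := by
    intro v hvS hvW u hu
    exact (gw_invariant hinv (csetW_reach hu (mem_csetW_mk v))).2 hvS
  have hinterior : ∀ v x : Fin d → ℤ, EvenVert v → v ∈ S → (ZGraph d).Adj v x → x ∈ S := by
    intro v x hveven hvS hadj
    by_contra hxS
    exact not_evenVert_oddVert hveven (hodd v ⟨hvS, x, hadj, hxS⟩)
  have hpre_out : ∀ x : Fin d → ℤ,
      x ∈ (GW d W).connectedComponentMk ⁻¹' (InfC d W ∪ (BigC d W \ κ)) → x ∉ S := by
    intro x hx hxS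
    have hxW : x ∉ W := outSet_pre_not_W hx
    have hsub : csetW ((GW d W).connectedComponentMk x) ⊆ S := hconst x hxS hxW
    rcases Set.mem_preimage.1 hx with hinf | hbig
    · exact hinf.2 (Set.Finite.subset hS hsub)
    · exact hbig.2 (hκ2 _ hbig.1 hsub)
  constructor
  · rintro x (hpre | hadd)
    · exact (hκ1 _ (Set.mem_preimage.1 hpre).1).2 (mem_csetW_mk x)
    · obtain ⟨hxW, hxodd, v, hveven, hvpre, hadj⟩ := hadd
      have hvS : v ∈ S := (hκ1 _ (Set.mem_preimage.1 hvpre).1).2 (mem_csetW_mk v)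
      exact hinterior v x hveven hvS (SimpleGraph.Adj.symm hadj)
  · rintro x (hpre | hadd)
    · exact hpre_out x hpre
    · obtain ⟨hxW, hxeven, v, hvodd, hvpre, hadj⟩ := hadd
      intro hxS
      exact hpre_out v hvpre (hinterior x v hxeven hxS hadj)
open Classical in
/-- The finset of (boundary) pairs pointing into `W`. -/
noncomputable def WPf (d : ℕ) {W : Set (Fin d → ℤ)} (hW : W.Finite) :
    Finset ((Fin d → ℤ) × (Fin d → ℤ)) :=
  hW.toFinset.biUnion (fun w => (nbrF w).image (fun v => (v, w)))

theorem WPf_card {d : ℕ} {W : Set (Fin d → ℤ)} (hW : W.Finite) :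
    (WPf d hW).card ≤ 2 * d * W.ncard := by
  classical
  calc (WPf d hW).card ≤ ∑ w ∈ hW.toFinset, ((nbrF w).image (fun v => (v, w))).card :=
      Finset.card_biUnion_le
    _ ≤ ∑ _w ∈ hW.toFinset, 2 * d := Finset.sum_le_sum (fun w _ =>
        le_trans Finset.card_image_le (le_of_eq (card_nbrF w)))
    _ = hW.toFinset.card * (2 * d) := by rw [Finset.sum_const, smul_eq_mul]
    _ = 2 * d * W.ncard := by rw [Set.ncard_eq_toFinset_card _ hW]; ring

theorem mem_cFin_csetW {d : ℕ} {W : Set (Fin d → ℤ)} {c : (GW d W).ConnectedComponent}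
    {v : Fin d → ℤ} (h : v ∈ cFin c) : v ∈ csetW c := by
  by_cases hfin : (csetW c).Finite
  · exact (mem_cFin hfin).1 h
  · rw [cFin, dif_neg hfin] at h
    exact absurd h (Finset.notMem_empty v)

theorem bpF_sub_WPf {d : ℕ} {W : Set (Fin d → ℤ)} (hW : W.Finite)
    {c : (GW d W).ConnectedComponent} (hg : GoodC c) (hfin : (csetW c).Finite) :
    bpF (cFin c) ⊆ WPf d hW := by
  intro p hp
  obtain ⟨h1, h2⟩ := bp_mem_W hg hfin hp
  have hadj := (mem_bpF.1 hp).2.2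
  apply Finset.mem_biUnion.2
  refine ⟨p.2, hW.mem_toFinset.2 h2, Finset.mem_image.2 ⟨p.1, mem_nbrF.2 (SimpleGraph.Adj.symm hadj), rfl⟩⟩

theorem bpF_pairwise_disj {d : ℕ} {W : Set (Fin d → ℤ)}
    {c c' : (GW d W).ConnectedComponent} (h : c ≠ c') :
    Disjoint (bpF (cFin c)) (bpF (cFin c')) := by
  rw [Finset.disjoint_left]
  intro p hp hp'
  have h1 : p.1 ∈ csetW c := mem_cFin_csetW (mem_bpF.1 hp).1
  have h2 : p.1 ∈ csetW c' := mem_cFin_csetW (mem_bpF.1 hp').1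
  exact h (h1.symm.trans h2)

theorem sum_bp_le {d : ℕ} {W : Set (Fin d → ℤ)} (hW : W.Finite)
    (T : Finset ((GW d W).ConnectedComponent))
    (hT : ∀ c ∈ T, GoodC c ∧ (csetW c).Finite) :
    ∑ c ∈ T, (bpF (cFin c)).card ≤ 2 * d * W.ncard := by
  classical
  rw [← Finset.card_biUnion (fun x _ y _ hxy => bpF_pairwise_disj hxy)]
  calc (T.biUnion (fun c => bpF (cFin c))).card ≤ (WPf d hW).card := by
        apply Finset.card_le_card
        intro p hp
        obtain ⟨c, hc, hpc⟩ := Finset.mem_biUnion.1 hp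
        exact bpF_sub_WPf hW (hT c hc).1 (hT c hc).2 hpc
    _ ≤ 2 * d * W.ncard := WPf_card hW

theorem finite_of_bp_nonempty {d : ℕ} {W : Set (Fin d → ℤ)} (hW : W.Finite)
    (T : Set ((GW d W).ConnectedComponent))
    (hT : ∀ c ∈ T, GoodC c ∧ (csetW c).Finite ∧ (bpF (cFin c)).Nonempty) : T.Finite := by
  classical
  set F : (GW d W).ConnectedComponent → (Fin d → ℤ) × (Fin d → ℤ) :=
    fun c => if h : (bpF (cFin c)).Nonempty then h.choose else ((fun _ => 0), (fun _ => 0))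
    with hF
  have hmem : ∀ c ∈ T, F c ∈ bpF (cFin c) := by
    intro c hc
    rw [hF]
    simp only
    rw [dif_pos (hT c hc).2.2]
    exact (hT c hc).2.2.choose_spec
  have hinj : Set.InjOn F T := by
    intro c hc c' hc' hcc
    by_contra hne
    have h1 := mem_cFin_csetW (mem_bpF.1 (hmem c hc)).1
    have h2 := mem_cFin_csetW (mem_bpF.1 (hmem c' hc')).1
    rw [hcc] at h1
    exact hne (h1.symm.trans h2)
  apply Set.Finite.of_finite_image _ hinj
  apply Set.Finite.subset (WPf d hW).finite_toSet
  rintro p ⟨c, hc, rfl⟩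
  exact bpF_sub_WPf hW (hT c hc).1 (hT c hc).2.1 (hmem c hc)
theorem separating_set_to_small_approximations' (d : ℕ) (hd : 2 ≤ d) (n : ℕ) (hn : 1 ≤ n)
    (W : Set (Fin d → ℤ)) (hW : W.Finite) :
    ∃ 𝒜 : Set (Approx d), 𝒜.Finite ∧
      (∀ A ∈ 𝒜, A.star.Finite ∧ A.star.ncard ≤ 3 * W.ncard) ∧
      (𝒜.ncard : ℝ) ≤ (4 : ℝ) ^ ((W.ncard : ℝ) / d) ∧
      ∀ S : Set (Fin d → ℤ), S.Finite → IsRegularSet d S → IsOddSet d S →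
        (edgeBdry d S).ncard = n → Separates d W S → ∃ A ∈ 𝒜, Approximates A S := by
  classical
  have hd0 : 0 < d := by omega
  have hSmallFin : (SmallC d W).Finite := by
    apply finite_of_bp_nonempty hW
    rintro c ⟨hg, hfin, hcard⟩
    refine ⟨hg, hfin, ?_⟩
    have h1 := small_bp (le_of_lt hcard)
    have h2 : 0 < (cFin c).card := (cFin_nonempty hfin).card_pos
    rw [← Finset.card_pos]
    have h3 : 0 < d * (cFin c).card := Nat.mul_pos hd0 h2
    omega
  have hBigFin : (BigC d W).Finite := by
    apply finite_of_bp_nonempty hW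
    rintro c ⟨hg, hfin, hcard⟩
    refine ⟨hg, hfin, ?_⟩
    have h1 := big_bp hd (C := cFin c) hcard
    rw [← Finset.card_pos]
    have h3 : 0 < d ^ 2 := by positivity
    omega
  set BF := hBigFin.toFinset with hBF
  set SF := hSmallFin.toFinset with hSF
  have hUeq : ((GW d W).connectedComponentMk ⁻¹' SmallC d W)
      = ↑(SF.biUnion (fun c => cFin c)) := by
    ext v
    simp only [Set.mem_preimage, Finset.coe_biUnion, Set.mem_iUnion, Finset.mem_coe,
      Finset.mem_biUnion]
    constructor
    · intro hv
      exact ⟨_, hSmallFin.mem_toFinset.2 hv, (mem_cFin hv.2.1).2 (mem_csetW_mk v)⟩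
    · rintro ⟨c, hc, hvc⟩
      have hc' := hSmallFin.mem_toFinset.1 hc
      have h2 : (GW d W).connectedComponentMk v = c := mem_cFin_csetW hvc
      rw [h2]
      exact hc'
  have hSmallSum : ∑ c ∈ SF, (cFin c).card ≤ 2 * W.ncard := by
    have h1 : d * ∑ c ∈ SF, (cFin c).card ≤ d * (2 * W.ncard) := by
      calc d * ∑ c ∈ SF, (cFin c).card = ∑ c ∈ SF, d * (cFin c).card := Finset.mul_sum ..
        _ ≤ ∑ c ∈ SF, (bpF (cFin c)).card := Finset.sum_le_sum (fun c hc =>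
            small_bp (le_of_lt (hSmallFin.mem_toFinset.1 hc).2.2))
        _ ≤ 2 * d * W.ncard := sum_bp_le hW SF (fun c hc =>
            ⟨(hSmallFin.mem_toFinset.1 hc).1, (hSmallFin.mem_toFinset.1 hc).2.1⟩)
        _ = d * (2 * W.ncard) := by ring
    exact Nat.le_of_mul_le_mul_left h1 hd0
  have hBigBound : d * BF.card ≤ 2 * W.ncard := by
    have h1 : d * (d * BF.card) ≤ d * (2 * W.ncard) := by
      calc d * (d * BF.card) = ∑ _c ∈ BF, d ^ 2 := by
            rw [Finset.sum_const, smul_eq_mul]; ring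
        _ ≤ ∑ c ∈ BF, (bpF (cFin c)).card := Finset.sum_le_sum (fun c hc =>
            big_bp hd (hBigFin.mem_toFinset.1 hc).2.2)
        _ ≤ 2 * d * W.ncard := sum_bp_le hW BF (fun c hc =>
            ⟨(hBigFin.mem_toFinset.1 hc).1, (hBigFin.mem_toFinset.1 hc).2.1⟩)
        _ = d * (2 * W.ncard) := by ring
    exact Nat.le_of_mul_le_mul_left h1 hd0
  set 𝒜F := BF.powerset.image (fun T : Finset ((GW d W).ConnectedComponent) =>
    Abuild d W ↑T) with h𝒜
  refine ⟨↑𝒜F, Finset.finite_toSet _, ?_, ?_, ?_⟩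
  · rintro A hA
    obtain ⟨T, hT, rfl⟩ := Finset.mem_image.1 hA
    have hstar := abuild_star_subset W (↑T : Set _)
    rw [hUeq] at hstar
    have hRfin : (W ∪ ↑(SF.biUnion (fun c => cFin c))).Finite :=
      hW.union (Finset.finite_toSet _)
    constructor
    · exact hRfin.subset hstar
    · calc (Abuild d W ↑T).star.ncard ≤ (W ∪ ↑(SF.biUnion (fun c => cFin c))).ncard :=
            Set.ncard_le_ncard hstar hRfin
        _ ≤ W.ncard + (↑(SF.biUnion (fun c => cFin c)) : Set (Fin d → ℤ)).ncard :=
            Set.ncard_union_le ..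
        _ = W.ncard + (SF.biUnion (fun c => cFin c)).card := by rw [Set.ncard_coe_finset]
        _ ≤ W.ncard + ∑ c ∈ SF, (cFin c).card := by
            have := Finset.card_biUnion_le (s := SF) (t := fun c => cFin c)
            omega
        _ ≤ W.ncard + 2 * W.ncard := by omega
        _ = 3 * W.ncard := by ring
  · have hcard : (↑𝒜F : Set (Approx d)).ncard ≤ 2 ^ BF.card := by
      rw [Set.ncard_coe_finset]
      calc 𝒜F.card ≤ BF.powerset.card := Finset.card_image_le
        _ = 2 ^ BF.card := Finset.card_powerset BF
    have hexp : (BF.card : ℝ) ≤ 2 * (W.ncard : ℝ) / d := by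
      rw [le_div_iff₀ (by exact_mod_cast hd0 : (0:ℝ) < (d:ℝ))]
      calc (BF.card : ℝ) * d = ((d * BF.card : ℕ) : ℝ) := by push_cast; ring
        _ ≤ ((2 * W.ncard : ℕ) : ℝ) := by exact_mod_cast hBigBound
        _ = 2 * (W.ncard : ℝ) := by push_cast; ring
    calc ((↑𝒜F : Set (Approx d)).ncard : ℝ) ≤ ((2 ^ BF.card : ℕ) : ℝ) := by exact_mod_cast hcard
      _ = (2:ℝ) ^ (BF.card : ℝ) := by
          push_cast
          exact (Real.rpow_natCast 2 BF.card).symm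
      _ ≤ (2:ℝ) ^ (2 * (W.ncard : ℝ) / d) := Real.rpow_le_rpow_of_exponent_le (by norm_num) hexp
      _ = (4:ℝ) ^ ((W.ncard : ℝ) / d) := by
          have h4 : (4:ℝ) = (2:ℝ) ^ (2:ℝ) := by
            rw [show ((2:ℝ)) = ((2:ℕ):ℝ) from by norm_num]
            rw [Real.rpow_natCast]
            norm_num
          rw [h4, ← Real.rpow_mul (by norm_num : (0:ℝ) ≤ 2)]
          ring_nf
  · intro S hS hreg hodd hbd hsep
    set T := BF.filter (fun c => csetW c ⊆ S) with hT
    refine ⟨Abuild d W ↑T, Finset.mem_coe.2 (Finset.mem_image.2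
      ⟨T, Finset.mem_powerset.2 (Finset.filter_subset _ _), rfl⟩), ?_⟩
    apply abuild_approximates hS hodd hsep
    · intro c hc
      have hc2 := Finset.mem_filter.1 (Finset.mem_coe.1 hc)
      exact ⟨hBigFin.mem_toFinset.1 hc2.1, hc2.2⟩
    · intro c hcB hsub
      exact Finset.mem_coe.2 (Finset.mem_filter.2 ⟨hBigFin.mem_toFinset.2 hcB, hsub⟩)

/-- For any `n ≥ 1` and finite `W ⊆ ℤ^d`, there is a family `𝒜` of approximations, each
of size at most `3|W|`, with `|𝒜| ≤ 4^{|W|/d}`, approximating every finite regular odd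
set `S` with `|∂S| = n` which is separated by `W`. -/
theorem separating_set_to_small_approximations (d : ℕ) (hd : 2 ≤ d) (n : ℕ) (hn : 1 ≤ n)
    (W : Set (Fin d → ℤ)) (hW : W.Finite) :
    ∃ 𝒜 : Set (Approx d), 𝒜.Finite ∧
      (∀ A ∈ 𝒜, A.star.Finite ∧ A.star.ncard ≤ 3 * W.ncard) ∧
      (𝒜.ncard : ℝ) ≤ (4 : ℝ) ^ ((W.ncard : ℝ) / d) ∧
      ∀ S : Set (Fin d → ℤ), S.Finite → IsRegularSet d S → IsOddSet d S →
        (edgeBdry d S).ncard = n → Separates d W S → ∃ A ∈ 𝒜, Approximates A S := by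
  exact separating_set_to_small_approximations' d hd n hn W hW
end

section
/- Fix d ≥ 2. For every approximation A there exists an approximation B such that the collection of finite regular odd sets approximated by A equals the collection of finite regular odd sets approximated by B, B* ⊆ A*, and B* contains no isolated vertices (every vertex of B* has a neighbor in B*). -/
lemma zadj_parity {d : ℕ} {u v : Fin d → ℤ} (h : (ZGraph d).Adj u v) :
    OddVert u ↔ ¬ OddVert v := by
  have h' : ∑ i, (u i - v i).natAbs = 1 := h
  have hsum : Odd (∑ i, (u i - v i)) := by
    rw [Int.odd_iff, Finset.sum_int_mod]
    have he : ∀ i ∈ Finset.univ, (u i - v i) % 2 = ((u i - v i).natAbs : ℤ) % 2 := by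
      intro i _
      rcases Int.natAbs_eq (u i - v i) with h2 | h2
      · rw [← h2]
      · conv_lhs => rw [h2]
        rw [Int.neg_emod_two]
    rw [Finset.sum_congr rfl he, ← Finset.sum_int_mod]
    have hc : (∑ i, ((u i - v i).natAbs : ℤ)) = 1 := by exact_mod_cast h'
    rw [hc]; rfl
  rw [Finset.sum_sub_distrib, Int.odd_sub] at hsum
  unfold OddVert
  rw [hsum, Int.not_odd_iff_even.symm]


/-- Every approximation `A` can be replaced by an approximation `B` with the same
collection of finite regular odd sets approximated, `B* ⊆ A*`, and no isolated vertices
in `B*`. -/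
theorem eliminate_isolated_unknown_vertices (d : ℕ) (hd : 2 ≤ d) (A : Approx d) :
    ∃ B : Approx d,
      {S : Set (Fin d → ℤ) | S.Finite ∧ IsRegularSet d S ∧ IsOddSet d S ∧ Approximates A S} =
        {S : Set (Fin d → ℤ) | S.Finite ∧ IsRegularSet d S ∧ IsOddSet d S ∧ Approximates B S} ∧
      B.star ⊆ A.star ∧ ∀ v ∈ B.star, ∃ u ∈ B.star, (ZGraph d).Adj v u := by
  classical
  set Iso : Set (Fin d → ℤ) :=
    {v | v ∈ A.star ∧ ∀ u, (ZGraph d).Adj v u → u ∉ A.star} with hIso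
  set I : Set (Fin d → ℤ) :=
    {v | v ∈ Iso ∧ ((OddVert v ∧ ∃ u, (ZGraph d).Adj v u ∧ u ∈ A.inn) ∨
      (¬ OddVert v ∧ ∀ u, (ZGraph d).Adj v u → u ∈ A.inn))} with hI
  set O : Set (Fin d → ℤ) := Iso \ I with hO
  have hstar : ∀ w : Fin d → ℤ, w ∉ A.star → w ∈ A.inn ∪ A.out := by
    intro w hw
    by_contra hcon
    exact hw hcon
  have hIA : I ⊆ A.star := fun v hv => hv.1.1
  have hOA : O ⊆ A.star := fun v hv => hv.1.1
  -- disjointness of the new approximation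
  have hdisj : Disjoint (A.inn ∪ I) (A.out ∪ O) := by
    rw [Set.disjoint_left]
    rintro x (hx | hx) (hy | hy)
    · exact Set.disjoint_left.mp A.disj hx hy
    · exact hOA hy (Or.inl hx)
    · exact hIA hx (Or.inr hy)
    · exact hy.2 hx
  -- the new inner set is odd
  have hinn_odd : IsOddSet d (A.inn ∪ I) := by
    rintro u ⟨hu, w, hadj, hw⟩
    rcases hu with hu | hu
    · exact A.inn_odd u ⟨hu, w, hadj, fun h => hw (Or.inl h)⟩
    · rcases hu.2 with ⟨hodd, -⟩ | ⟨-, hall⟩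
      · exact hodd
      · exact absurd (hall w hadj) (fun h => hw (Or.inl h))
  -- the new outer set is even
  have hout_even : IsEvenSet d (A.out ∪ O) := by
    rintro u ⟨hu, w, hadj, hw⟩
    rcases hu with hu | hu
    · exact A.out_even u ⟨hu, w, hadj, fun h => hw (Or.inl h)⟩
    · by_cases hodd : OddVert u
      · exfalso
        have hnI : ¬ ((OddVert u ∧ ∃ z, (ZGraph d).Adj u z ∧ z ∈ A.inn) ∨
            (¬ OddVert u ∧ ∀ z, (ZGraph d).Adj u z → z ∈ A.inn)) := by
          intro hc
          exact hu.2 ⟨hu.1, hc⟩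
        push_neg at hnI
        have hwni : w ∉ A.inn := hnI.1 hodd w hadj
        have hwns : w ∉ A.star := hu.1.2 w hadj
        rcases hstar w hwns with hwi | hwo
        · exact hwni hwi
        · exact hw (Or.inl hwo)
      · exact Int.not_odd_iff_even.mp hodd
  refine ⟨⟨A.inn ∪ I, A.out ∪ O, hdisj, hinn_odd, hout_even⟩, ?_, ?_, ?_⟩
  · -- equality of the collections of approximated sets
    ext S
    simp only [Set.mem_setOf_eq]
    constructor
    · rintro ⟨hfin, hreg, hodd, hAi, hAo⟩
      refine ⟨hfin, hreg, hodd, Set.union_subset hAi ?_, Set.union_subset hAo ?_⟩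
      · -- I ⊆ S
        intro v hv
        by_contra hvS
        rcases hv.2 with ⟨hvodd, u, hadj, huinn⟩ | ⟨hvev, hall⟩
        · have huS : u ∈ S := hAi huinn
          have hub : OddVert u := hodd u ⟨huS, v, hadj.symm, hvS⟩
          exact ((zadj_parity hadj).mp hvodd) hub
        · obtain ⟨w, hwS, hadjvw⟩ := hreg.2 v hvS
          exact hwS (hAi (hall w hadjvw))
      · -- O ⊆ Sᶜ
        rintro v ⟨hvIso, hvnI⟩ hvS
        by_cases hvodd : OddVert v
        · have hnI : ¬ ((OddVert v ∧ ∃ z, (ZGraph d).Adj v z ∧ z ∈ A.inn) ∨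
              (¬ OddVert v ∧ ∀ z, (ZGraph d).Adj v z → z ∈ A.inn)) := by
            intro hc
            exact hvnI ⟨hvIso, hc⟩
          push_neg at hnI
          obtain ⟨w, hwS, hadj⟩ := hreg.1 v hvS
          have hwns : w ∉ A.star := hvIso.2 w hadj
          rcases hstar w hwns with hwi | hwo
          · exact hnI.1 hvodd w hadj hwi
          · exact hAo hwo hwS
        · have hnI : ¬ ((OddVert v ∧ ∃ z, (ZGraph d).Adj v z ∧ z ∈ A.inn) ∨
              (¬ OddVert v ∧ ∀ z, (ZGraph d).Adj v z → z ∈ A.inn)) := by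
            intro hc
            exact hvnI ⟨hvIso, hc⟩
          push_neg at hnI
          obtain ⟨w, hadj, hwni⟩ := hnI.2 hvodd
          have hwns : w ∉ A.star := hvIso.2 w hadj
          rcases hstar w hwns with hwi | hwo
          · exact hwni hwi
          · have hwnS : w ∉ S := hAo hwo
            exact hvodd (hodd v ⟨hvS, w, hadj, hwnS⟩)
    · rintro ⟨hfin, hreg, hodd, hBi, hBo⟩
      exact ⟨hfin, hreg, hodd,
        (Set.subset_union_left).trans hBi, (Set.subset_union_left).trans hBo⟩
  · -- B.star ⊆ A.star
    intro v hv hvc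
    refine hv ?_
    show v ∈ (A.inn ∪ I) ∪ (A.out ∪ O)
    rcases hvc with h | h
    · exact Or.inl (Or.inl h)
    · exact Or.inr (Or.inl h)
  · -- no isolated vertices in B.star
    intro v hv
    have hvB : v ∉ (A.inn ∪ I) ∪ (A.out ∪ O) := hv
    have hvA : v ∈ A.star := by
      intro hc
      rcases hc with h | h
      · exact hvB (Or.inl (Or.inl h))
      · exact hvB (Or.inr (Or.inl h))
    have hvnIso : v ∉ Iso := by
      intro hc
      by_cases hvI : v ∈ I
      · exact hvB (Or.inl (Or.inr hvI))
      · exact hvB (Or.inr (Or.inr ⟨hc, hvI⟩))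
    have hex : ∃ u, (ZGraph d).Adj v u ∧ u ∈ A.star := by
      by_contra hc
      push_neg at hc
      exact hvnIso ⟨hvA, hc⟩
    obtain ⟨u, hadj, huA⟩ := hex
    have hunIso : u ∉ Iso := by
      intro hc
      exact hc.2 v (hadj.symm) hvA
    refine ⟨u, ?_, hadj⟩
    intro hc
    rcases hc with (h | h) | (h | h)
    · exact huA (Or.inl h)
    · exact hunIso h.1
    · exact huA (Or.inr h)
    · exact hunIso h.1
end
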